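/- Let γ : [0,1] → 𝕊² be C² with |γ'| = 1 and κ(θ) = ⟨γ''(θ),(γ×γ')(θ)⟩ ≥ c > 0, and let K, λ, δ be as before with λ ≤ K⁻¹ small. There is a constant C such that: for θ ∈ [0,1] and Δ with Cλ ≤ Δ ≤ C⁻¹, and all a ∈ [λ/2, λ], b ∈ [K⁻¹, 1], one has |⟨γ'(θ+Δ), a γ'(θ) + b (γ×γ')(θ)⟩| ≥ 10λ. -/

import Mathlib

noncomputable section
open Set MeasureTheory
open scoped ENNReal

abbrev E3 := EuclideanSpace ℝ (Fin 3)

/-- Cross product on `ℝ³`. -/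
def cross3 (a b : E3) : E3 :=
  (EuclideanSpace.equiv (Fin 3) ℝ).symm
    ![a 1 * b 2 - a 2 * b 1, a 2 * b 0 - a 0 * b 2, a 0 * b 1 - a 1 * b 0]

/-- Determinant of the 3×3 matrix with columns `a, b, c`. -/
def det3 (a b c : E3) : ℝ :=
  Matrix.det !![a 0, b 0, c 0; a 1, b 1, c 1; a 2, b 2, c 2]

lemma cross3_apply (a b : E3) (i : Fin 3) : cross3 a b i =
    ![a 1 * b 2 - a 2 * b 1, a 2 * b 0 - a 0 * b 2, a 0 * b 1 - a 1 * b 0] i := rfl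

lemma inner_self_cross3 (u v : E3) : (inner ℝ v (cross3 u v) : ℝ) = 0 := by
  simp [cross3_apply, PiLp.inner_apply, Fin.sum_univ_three]
  ring

lemma norm_cross3_le (u v : E3) (hu : ‖u‖ = 1) (hv : ‖v‖ = 1) : ‖cross3 u v‖ ≤ 1 := by
  have h1 : (inner ℝ u u : ℝ) = 1 := by rw [real_inner_self_eq_norm_sq, hu]; norm_num
  have h2 : (inner ℝ v v : ℝ) = 1 := by rw [real_inner_self_eq_norm_sq, hv]; norm_num
  simp only [PiLp.inner_apply, Fin.sum_univ_three, RCLike.inner_apply, conj_trivial] at h1 h2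
  have h3 : (inner ℝ (cross3 u v) (cross3 u v) : ℝ) ≤ 1 := by
    simp only [PiLp.inner_apply, Fin.sum_univ_three, RCLike.inner_apply, conj_trivial,
      cross3_apply, Matrix.cons_val_zero, Matrix.cons_val_one, Matrix.head_cons,
      Matrix.cons_val_two, Matrix.tail_cons]
    nlinarith [sq_nonneg (u 0 * v 0 + u 1 * v 1 + u 2 * v 2)]
  nlinarith [real_inner_self_eq_norm_sq (cross3 u v), norm_nonneg (cross3 u v)]

theorem plank_transversality_second_scenario
    (γ : ℝ → E3) (hγ : ContDiff ℝ 2 γ)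
    (hsphere : ∀ θ ∈ Icc (0:ℝ) 1, ‖γ θ‖ = 1)
    (hunit : ∀ θ ∈ Icc (0:ℝ) 1, ‖deriv γ θ‖ = 1)
    (c : ℝ) (hc : 0 < c)
    (hκ : ∀ θ ∈ Icc (0:ℝ) 1,
      c ≤ (inner ℝ (deriv (deriv γ) θ) (cross3 (γ θ) (deriv γ θ)) : ℝ))
    (K : ℝ) (hK : 1 ≤ K) :
    ∃ C : ℝ, 0 < C ∧ ∀ lam : ℝ, 0 < lam → lam ≤ K⁻¹ →
      ∀ θ Δ : ℝ, θ ∈ Icc (0:ℝ) 1 → θ + Δ ∈ Icc (0:ℝ) 1 →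
      C * lam ≤ Δ → Δ ≤ C⁻¹ →
      ∀ a b : ℝ, lam / 2 ≤ a → a ≤ lam → K⁻¹ ≤ b → b ≤ 1 →
        10 * lam ≤ |(inner ℝ (deriv γ (θ + Δ)) (a • deriv γ θ + b • cross3 (γ θ) (deriv γ θ)) : ℝ)| := by
  have hK0 : (0:ℝ) < K := lt_of_lt_of_le one_pos hK
  -- regularity
  have hd1 : ContDiff ℝ 1 (deriv γ) :=
    (contDiff_succ_iff_deriv.mp (show ContDiff ℝ (1+1) γ by exact_mod_cast hγ)).2.2
  have h0 := contDiff_succ_iff_deriv.mp (show ContDiff ℝ (0+1) (deriv γ) by exact_mod_cast hd1)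
  have hdd : Differentiable ℝ (deriv γ) := h0.1
  have hcont2 : Continuous (deriv (deriv γ)) := h0.2.2.continuous
  -- uniform continuity of the second derivative on [0,1]
  have huc := (isCompact_Icc : IsCompact (Icc (0:ℝ) 1)).uniformContinuousOn_of_continuous
    hcont2.continuousOn
  obtain ⟨δ0, hδ0, hδ⟩ := Metric.uniformContinuousOn_iff.mp huc (c/2) (by positivity)
  set C : ℝ := max (22*K/c) (2/δ0) with hC
  have hCpos : 0 < C := lt_of_lt_of_le (by positivity : (0:ℝ) < 22*K/c) (le_max_left _ _)
  refine ⟨C, hCpos, ?_⟩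
  intro lam hlam hlamK θ Δ hθ hθΔ hΔ1 hΔ2 a b ha1 ha2 hb1 hb2
  set N : E3 := cross3 (γ θ) (deriv γ θ) with hNdef
  have hΔpos : 0 < Δ := lt_of_lt_of_le (by positivity) hΔ1
  have hNnorm : ‖N‖ ≤ 1 := norm_cross3_le _ _ (hsphere θ hθ) (hunit θ hθ)
  have hCinv : C⁻¹ ≤ δ0/2 := by
    have h2 : 2/δ0 ≤ C := le_max_right _ _
    have := inv_anti₀ (show (0:ℝ) < 2/δ0 by positivity) h2
    calc C⁻¹ ≤ (2/δ0)⁻¹ := this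
    _ = δ0/2 := by field_simp
  have hsub : Icc θ (θ+Δ) ⊆ Icc 0 1 := Icc_subset_Icc hθ.1 hθΔ.2
  -- second derivative inner product bound on the interval
  have key : ∀ s ∈ Icc θ (θ+Δ), c/2 ≤ (inner ℝ (deriv (deriv γ) s) N : ℝ) := by
    intro s hs
    have hs01 : s ∈ Icc (0:ℝ) 1 := hsub hs
    have hdist : dist s θ < δ0 := by
      rw [Real.dist_eq, abs_of_nonneg (by linarith [hs.1])]
      have := hs.2
      linarith [hs.2, le_trans hΔ2 hCinv]
    have hnd := hδ s hs01 θ hθ hdist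
    rw [dist_eq_norm] at hnd
    have hper := hκ θ hθ
    have habs : |(inner ℝ (deriv (deriv γ) s - deriv (deriv γ) θ) N : ℝ)| ≤ c/2 := by
      refine le_trans (abs_real_inner_le_norm _ _) ?_
      nlinarith [norm_nonneg (deriv (deriv γ) s - deriv (deriv γ) θ)]
    rw [inner_sub_left] at habs
    have := (abs_le.mp habs).1
    linarith
  -- mean value: the angle gain
  have hfd : ∀ s : ℝ, HasDerivAt (fun t => (inner ℝ (deriv γ t) N : ℝ))
      ((inner ℝ (deriv (deriv γ) s) N : ℝ)) s := by
    intro s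
    have h := HasDerivAt.inner ℝ ((hdd s).hasDerivAt) (hasDerivAt_const s N)
    simpa using h
  have hmvt := (convex_Icc θ (θ+Δ)).mul_sub_le_image_sub_of_le_deriv
      (f := fun t => (inner ℝ (deriv γ t) N : ℝ))
      (fun x _ => ((hfd x).differentiableAt).continuousAt.continuousWithinAt)
      (fun x _ => ((hfd x).differentiableAt).differentiableWithinAt)
      (C := c/2)
      (fun x hx => by rw [(hfd x).deriv]; exact key x (interior_subset hx))
      θ (left_mem_Icc.mpr (by linarith)) (θ+Δ) (right_mem_Icc.mpr (by linarith))
      (by linarith)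
  have hzero : (inner ℝ (deriv γ θ) N : ℝ) = 0 := inner_self_cross3 _ _
  set y : ℝ := (inner ℝ (deriv γ (θ+Δ)) N : ℝ) with hy
  have hip2 : c/2 * Δ ≤ y := by simpa [hzero] using hmvt
  -- bound on the tangential inner product
  set x : ℝ := (inner ℝ (deriv γ (θ+Δ)) (deriv γ θ) : ℝ) with hx
  have hip1 : |x| ≤ 1 := by
    refine le_trans (abs_real_inner_le_norm _ _) ?_
    rw [hunit _ hθΔ, hunit _ hθ]; norm_num
  -- assemble
  have hΔlarge : (22*K/c)*lam ≤ Δ :=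
    le_trans (mul_le_mul_of_nonneg_right (le_max_left _ _) hlam.le) hΔ1
  have hylarge : 11 * K * lam ≤ y := by
    have : c/2 * ((22*K/c)*lam) ≤ c/2 * Δ :=
      mul_le_mul_of_nonneg_left hΔlarge (by positivity)
    have hEq : c/2 * ((22*K/c)*lam) = 11 * K * lam := by field_simp; ring
    linarith
  have hynn : 0 ≤ y := le_trans (by positivity) hylarge
  have hby : 11 * lam ≤ b * y := by
    have h1 : K⁻¹ * y ≤ b * y := mul_le_mul_of_nonneg_right hb1 hynn
    have h2 : K⁻¹ * (11*K*lam) ≤ K⁻¹ * y :=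
      mul_le_mul_of_nonneg_left hylarge (by positivity)
    have h3 : K⁻¹ * (11*K*lam) = 11 * lam := by field_simp
    linarith
  have hax : -lam ≤ a * x := by
    have h1 : -1 ≤ x := (abs_le.mp hip1).1
    nlinarith
  have hfinal : 10 * lam ≤ a * x + b * y := by linarith
  calc 10 * lam ≤ a * x + b * y := hfinal
  _ ≤ |a * x + b * y| := le_abs_self _
  _ = |(inner ℝ (deriv γ (θ + Δ)) (a • deriv γ θ + b • N) : ℝ)| := by
      rw [inner_add_right, real_inner_smul_right, real_inner_smul_right]
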